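/- arXiv:1511.04657 — 2 statements merged into one kernel-verified Lean document; each statement's English description precedes it below -/
import Mathlib

section
/- Let y¹, y² be independent standard Gaussians, f(u,y) = exp(−(u²−2yu)/2), and c(y¹,u¹,u²) = l(u¹−y¹)² + (u²−u¹)². Then for any measurable γ¹, γ² : ℝ → ℝ, with u¹ = γ¹(y¹) and v standard Gaussian independent of y¹, the Witsenhausen cost satisfies E[c(y¹, γ¹(y¹), γ²(γ¹(y¹)+v))] = ∫∫ c(y¹, γ¹(y¹), γ²(y²)) f(γ¹(y¹), y²) dP_g(y¹) dP_g(y²), where P_g is the standard Gaussian law. -/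
open MeasureTheory ProbabilityTheory
open scoped ENNReal

lemma gaussianPDF_shift (u y : ℝ) :
    gaussianPDF u 1 y =
      gaussianPDF 0 1 y * ENNReal.ofReal (Real.exp (-(u ^ 2 - 2 * y * u) / 2)) := by
  rw [gaussianPDF, gaussianPDF, ← ENNReal.ofReal_mul (gaussianPDFReal_nonneg _ _ _)]
  congr 1
  simp only [gaussianPDFReal, mul_assoc, ← Real.exp_add]
  congr 2
  push_cast
  ring

lemma shift_lintegral (u : ℝ) (g : ℝ → ℝ≥0∞) (hg : Measurable g) :
    ∫⁻ v, g (u + v) ∂(gaussianReal 0 1) =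
      ∫⁻ y, g y * ENNReal.ofReal (Real.exp (-(u ^ 2 - 2 * y * u) / 2))
        ∂(gaussianReal 0 1) := by
  have h1 : ∫⁻ v, g (u + v) ∂(gaussianReal 0 1)
      = ∫⁻ y, g y ∂((gaussianReal 0 1).map (u + ·)) :=
    (lintegral_map hg (measurable_const_add u)).symm
  rw [h1, gaussianReal_map_const_add, zero_add,
    gaussianReal_of_var_ne_zero _ one_ne_zero,
    gaussianReal_of_var_ne_zero _ one_ne_zero,
    lintegral_withDensity_eq_lintegral_mul _ (measurable_gaussianPDF _ _) hg,
    lintegral_withDensity_eq_lintegral_mul _ (measurable_gaussianPDF _ _)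
      (show Measurable (fun y => g y * ENNReal.ofReal (Real.exp (-(u ^ 2 - 2 * y * u) / 2))) from
        hg.mul ((Measurable.exp (by fun_prop)).ennreal_ofReal))]
  congr 1
  ext y
  simp only [Pi.mul_apply]
  rw [gaussianPDF_shift u y]
  ring

/-- Static reduction of Witsenhausen's counterexample: with `y¹, v` independent standard
Gaussians, `u¹ = γ¹ y¹`, `y² = u¹ + v`, `u² = γ² y²`, the cost
`E[c (y¹, u¹, u²)]` with `c (y¹,u¹,u²) = l (u¹-y¹)² + (u²-u¹)²` equals the double integral of
`c (y¹, γ¹ y¹, γ² y²) · f (γ¹ y¹) y²` with respect to the product of two standard Gaussian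
laws, where `f u y = exp(-(u² - 2yu)/2)`. -/
theorem witsenhausen_static_reduction
    (l : ℝ) (γ₁ γ₂ : ℝ → ℝ) (hγ₁ : Measurable γ₁) (hγ₂ : Measurable γ₂) :
    ∫⁻ p : ℝ × ℝ,
        ENNReal.ofReal
          (l * (γ₁ p.1 - p.1) ^ 2 + (γ₂ (γ₁ p.1 + p.2) - γ₁ p.1) ^ 2)
        ∂((gaussianReal 0 1).prod (gaussianReal 0 1)) =
      ∫⁻ p : ℝ × ℝ,
        ENNReal.ofReal
          ((l * (γ₁ p.1 - p.1) ^ 2 + (γ₂ p.2 - γ₁ p.1) ^ 2) *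
            Real.exp (-((γ₁ p.1) ^ 2 - 2 * p.2 * γ₁ p.1) / 2))
        ∂((gaussianReal 0 1).prod (gaussianReal 0 1)) := by
  rw [lintegral_prod _ (by fun_prop), lintegral_prod _ (by fun_prop)]
  refine lintegral_congr fun x => ?_
  have := shift_lintegral (γ₁ x)
    (fun y => ENNReal.ofReal (l * (γ₁ x - x) ^ 2 + (γ₂ y - γ₁ x) ^ 2)) (by fun_prop)
  rw [this]
  refine lintegral_congr fun y => ?_
  rw [ENNReal.ofReal_mul' (Real.exp_nonneg _)]
end

section
/- Fix M > 0 and define w₁(y) = sup_{(u¹,u²)∈[−M,M]²} [l(u¹−y)² + (u²−u¹)²]. Then w₁(y) = l(M+|y|)² + 4M², and for the family of probability measures P_{l,n} = P_g ∘ q_{l,n}⁻¹ (pushforwards of the standard Gaussian under uniform quantizers q_{l,n} of [−l,l] extended by mapping ℝ∖[−l,l] to 0), one has lim_{R→∞} sup_{l,n} ∫_{{w₁>R}} w₁ dP_{l,n} = 0. -/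
open MeasureTheory ProbabilityTheory Set
open scoped ENNReal

lemma aux_poly_exp_integrable (c₀ c₁ : ℝ) (hc₀ : 0 ≤ c₀) (hc₁ : 0 ≤ c₁) :
    Integrable (fun x : ℝ => (c₀ + c₁ * x ^ 2) * Real.exp (-(2⁻¹ : ℝ) * x ^ 2)) := by
  have hint : Integrable (fun x : ℝ => (c₀ + 4 * c₁) * Real.exp (-(4⁻¹ : ℝ) * x ^ 2)) :=
    (integrable_exp_neg_mul_sq (by norm_num : (0:ℝ) < 4⁻¹)).const_mul _
  refine hint.mono' ?_ (Filter.Eventually.of_forall fun x => ?_)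
  · exact (Continuous.aestronglyMeasurable (by continuity))
  · have he : (0:ℝ) < Real.exp (-(4⁻¹ : ℝ) * x ^ 2) := Real.exp_pos _
    have he1 : Real.exp (-(4⁻¹ : ℝ) * x ^ 2) ≤ 1 := by
      rw [Real.exp_le_one_iff]; nlinarith [sq_nonneg x]
    have hef : Real.exp (-(4⁻¹ : ℝ) * x ^ 2) * Real.exp ((4⁻¹ : ℝ) * x ^ 2) = 1 := by
      rw [← Real.exp_add]; ring_nf; exact Real.exp_zero
    have hsq : Real.exp (-(2⁻¹ : ℝ) * x ^ 2)
        = Real.exp (-(4⁻¹ : ℝ) * x ^ 2) * Real.exp (-(4⁻¹ : ℝ) * x ^ 2) := by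
      rw [← Real.exp_add]; ring_nf
    have hx : x ^ 2 ≤ 4 * Real.exp ((4⁻¹ : ℝ) * x ^ 2) := by
      have := Real.add_one_le_exp ((4⁻¹ : ℝ) * x ^ 2)
      nlinarith
    have hfe : Real.exp ((4⁻¹ : ℝ) * x ^ 2) *
        (Real.exp (-(4⁻¹ : ℝ) * x ^ 2) * Real.exp (-(4⁻¹ : ℝ) * x ^ 2))
        = Real.exp (-(4⁻¹ : ℝ) * x ^ 2) := by
      rw [← mul_assoc, mul_comm (Real.exp ((4⁻¹ : ℝ) * x ^ 2)), hef, one_mul]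
    have key : x ^ 2 * (Real.exp (-(4⁻¹ : ℝ) * x ^ 2) * Real.exp (-(4⁻¹ : ℝ) * x ^ 2))
        ≤ 4 * Real.exp (-(4⁻¹ : ℝ) * x ^ 2) := by
      calc x ^ 2 * (Real.exp (-(4⁻¹ : ℝ) * x ^ 2) * Real.exp (-(4⁻¹ : ℝ) * x ^ 2))
          ≤ (4 * Real.exp ((4⁻¹ : ℝ) * x ^ 2)) *
            (Real.exp (-(4⁻¹ : ℝ) * x ^ 2) * Real.exp (-(4⁻¹ : ℝ) * x ^ 2)) :=
            mul_le_mul_of_nonneg_right hx (by positivity)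
        _ = 4 * Real.exp (-(4⁻¹ : ℝ) * x ^ 2) := by rw [mul_assoc, hfe]
    have he2 : Real.exp (-(4⁻¹ : ℝ) * x ^ 2) * Real.exp (-(4⁻¹ : ℝ) * x ^ 2)
        ≤ Real.exp (-(4⁻¹ : ℝ) * x ^ 2) := by nlinarith
    rw [Real.norm_eq_abs, abs_of_nonneg (by positivity), hsq]
    nlinarith [mul_le_mul_of_nonneg_left he2 hc₀, mul_le_mul_of_nonneg_left key hc₁]

/-- The Witsenhausen cost envelope `w₁ y = sup_{(u¹,u²) ∈ [-M,M]²} (l (u¹-y)² + (u²-u¹)²)`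
equals `l (M + |y|)² + 4 M²`, and `w₁` is uniformly integrable with respect to the pushforwards
of the standard Gaussian law under any family of quantizers `q i` satisfying
`|q i y| ≤ |y| + 1`. -/
theorem witsenhausen_envelope_formula_and_uniform_integrability
    (M l : ℝ) (hM : 0 < M) (hl : 0 < l) :
    (∀ y : ℝ,
      sSup {c : ℝ | ∃ u₁ ∈ Icc (-M) M, ∃ u₂ ∈ Icc (-M) M,
          c = l * (u₁ - y) ^ 2 + (u₂ - u₁) ^ 2} =
        l * (M + |y|) ^ 2 + 4 * M ^ 2) ∧
    (∀ (ι : Type) (q : ι → ℝ → ℝ), (∀ i, Measurable (q i)) →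
      (∀ i y, |q i y| ≤ |y| + 1) →
      ∀ ε > 0, ∃ R₀ : ℝ, ∀ R ≥ R₀, ∀ i,
        ∫⁻ y in {y : ℝ | R < l * (M + |y|) ^ 2 + 4 * M ^ 2},
            ENNReal.ofReal (l * (M + |y|) ^ 2 + 4 * M ^ 2)
            ∂((gaussianReal 0 1).map (q i)) < ENNReal.ofReal ε) := by
  have hub : ∀ y : ℝ, ∀ c ∈ {c : ℝ | ∃ u₁ ∈ Icc (-M) M, ∃ u₂ ∈ Icc (-M) M,
      c = l * (u₁ - y) ^ 2 + (u₂ - u₁) ^ 2}, c ≤ l * (M + |y|) ^ 2 + 4 * M ^ 2 := by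
    rintro y c ⟨u₁, hu₁, u₂, hu₂, rfl⟩
    have h1 : |u₁| ≤ M := abs_le.mpr ⟨hu₁.1, hu₁.2⟩
    have h2 : |u₂| ≤ M := abs_le.mpr ⟨hu₂.1, hu₂.2⟩
    have hA : (u₁ - y) ^ 2 ≤ (M + |y|) ^ 2 := by
      rw [← sq_abs (u₁ - y)]
      have : |u₁ - y| ≤ M + |y| := (abs_sub u₁ y).trans (by linarith)
      exact pow_le_pow_left₀ (abs_nonneg _) this 2
    have hB : (u₂ - u₁) ^ 2 ≤ 4 * M ^ 2 := by
      have : |u₂ - u₁| ≤ 2 * M := (abs_sub u₂ u₁).trans (by linarith)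
      have := pow_le_pow_left₀ (abs_nonneg (u₂ - u₁)) this 2
      rw [sq_abs] at this; nlinarith
    nlinarith
  constructor
  · intro y
    apply le_antisymm
    · apply Real.sSup_le (hub y)
      positivity
    · apply le_csSup ⟨_, hub y⟩
      rcases le_or_gt 0 y with hy | hy
      · refine ⟨-M, ⟨le_refl _, by linarith⟩, M, ⟨by linarith, le_refl _⟩, ?_⟩
        rw [abs_of_nonneg hy]; ring
      · refine ⟨M, ⟨by linarith, le_refl _⟩, -M, ⟨le_refl _, by linarith⟩, ?_⟩
        rw [abs_of_neg hy]; ring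
  · intro ι q hq hqb ε hε
    set w : ℝ → ℝ := fun y => l * (M + |y|) ^ 2 + 4 * M ^ 2 with hw
    set h : ℝ → ℝ := fun x => l * (M + |x| + 1) ^ 2 + 4 * M ^ 2 with hhdef
    have hwm : Measurable w := by
      apply Measurable.add _ measurable_const
      exact (measurable_const.add measurable_abs).pow_const 2 |>.const_mul l
    have hhm : Measurable h := by
      apply Measurable.add _ measurable_const
      exact ((measurable_const.add measurable_abs).add measurable_const).pow_const 2
        |>.const_mul l
    have hhnn : ∀ x, 0 ≤ h x := fun x => by
      simp only [hhdef]; positivity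
    -- integrability of h w.r.t. the Gaussian
    have hint : Integrable h (gaussianReal 0 1) := by
      rw [gaussianReal_of_var_ne_zero 0 one_ne_zero]
      rw [integrable_withDensity_iff (measurable_gaussianPDF 0 1)
        (Filter.Eventually.of_forall fun x => ENNReal.ofReal_lt_top)]
      have hkey := aux_poly_exp_integrable (l * (2 * (M + 1) ^ 2) + 4 * M ^ 2) (2 * l)
        (by positivity) (by positivity)
      refine hkey.mono' ?_ (Filter.Eventually.of_forall fun x => ?_)
      · exact (hhm.mul (measurable_gaussianPDF 0 1).ennreal_toReal).aestronglyMeasurable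
      · have hpdf : (gaussianPDF 0 1 x).toReal = gaussianPDFReal 0 1 x :=
          ENNReal.toReal_ofReal (gaussianPDFReal_nonneg 0 1 x)
        rw [Real.norm_eq_abs, hpdf]
        have hpdfval : gaussianPDFReal 0 1 x
            = (Real.sqrt (2 * Real.pi))⁻¹ * Real.exp (-(2⁻¹ : ℝ) * x ^ 2) := by
          simp only [gaussianPDFReal, NNReal.coe_one, mul_one, sub_zero]
          congr 1
          ring
        have hpdfle : gaussianPDFReal 0 1 x ≤ Real.exp (-(2⁻¹ : ℝ) * x ^ 2) := by
          rw [hpdfval]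
          have h2pi : (1:ℝ) ≤ Real.sqrt (2 * Real.pi) := by
            rw [show (1:ℝ) = Real.sqrt 1 by simp]
            exact Real.sqrt_le_sqrt (by nlinarith [Real.pi_gt_three])
          have : (Real.sqrt (2 * Real.pi))⁻¹ ≤ 1 := by
            rw [inv_le_one_iff₀]; right; exact h2pi
          nlinarith [Real.exp_pos (-(2⁻¹ : ℝ) * x ^ 2)]
        have hpdfnn : 0 ≤ gaussianPDFReal 0 1 x := gaussianPDFReal_nonneg 0 1 x
        have hhle : h x ≤ l * (2 * (M + 1) ^ 2) + 4 * M ^ 2 + 2 * l * x ^ 2 := by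
          simp only [hhdef]
          have : (M + |x| + 1) ^ 2 ≤ 2 * (M + 1) ^ 2 + 2 * x ^ 2 := by
            nlinarith [sq_abs x, abs_nonneg x, sq_nonneg (M + 1 - |x|)]
          nlinarith
        rw [abs_of_nonneg (mul_nonneg (hhnn x) hpdfnn)]
        apply mul_le_mul hhle hpdfle hpdfnn
        nlinarith [hhnn x, sq_nonneg x]
    -- the finite measure ν with density h
    set ν : Measure ℝ := (gaussianReal 0 1).withDensity (fun x => ENNReal.ofReal (h x)) with hν
    have hνfin : ν univ ≠ ∞ := by
      rw [hν, withDensity_apply _ MeasurableSet.univ, Measure.restrict_univ]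
      have := hint.hasFiniteIntegral
      rw [HasFiniteIntegral] at this
      refine ne_of_lt (lt_of_le_of_lt (lintegral_mono fun x => ?_) this)
      rw [← ofReal_norm, Real.norm_eq_abs, abs_of_nonneg (hhnn x)]
    set T : ℕ → Set ℝ := fun n => {x | (n : ℝ) < h x} with hT
    have hTm : ∀ n, MeasurableSet (T n) := fun n => measurableSet_lt measurable_const hhm
    have hTanti : Antitone T := by
      intro m n hmn x hx
      simp only [hT, mem_setOf_eq] at hx ⊢
      exact lt_of_le_of_lt (by exact_mod_cast Nat.cast_le.mpr hmn) hx
    have hTinter : ⋂ n, T n = ∅ := by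
      ext x
      simp only [mem_iInter, mem_empty_iff_false, iff_false, not_forall, hT, mem_setOf_eq,
        not_lt]
      obtain ⟨n, hn⟩ := exists_nat_ge (h x)
      exact ⟨n, hn⟩
    have htend : Filter.Tendsto (fun n => ν (T n)) Filter.atTop (nhds 0) := by
      have := tendsto_measure_iInter_atTop (μ := ν) (fun n => (hTm n).nullMeasurableSet) hTanti
        ⟨0, ne_top_of_le_ne_top hνfin (measure_mono (subset_univ _))⟩
      rw [hTinter] at this
      simp only [measure_empty] at this
      exact this
    have hεpos : (0 : ℝ≥0∞) < ENNReal.ofReal ε := ENNReal.ofReal_pos.mpr hε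
    obtain ⟨N, hN⟩ := (htend.eventually_lt_const hεpos).exists
    refine ⟨N, fun R hR i => ?_⟩
    have hSm : MeasurableSet {y : ℝ | R < w y} := measurableSet_lt measurable_const hwm
    have hfm : Measurable (fun y : ℝ => ENNReal.ofReal (w y)) := hwm.ennreal_ofReal
    rw [setLIntegral_map hSm hfm (hq i)]
    have hsub : (q i) ⁻¹' {y : ℝ | R < w y} ⊆ T N := by
      intro x hx
      simp only [mem_preimage, mem_setOf_eq, hw] at hx
      simp only [hT, mem_setOf_eq]
      have hwh : w (q i x) ≤ h x := by
        simp only [hw, hhdef]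
        have h1 : M + |q i x| ≤ M + |x| + 1 := by
          have := hqb i x; linarith
        have h2 : (M + |q i x|) ^ 2 ≤ (M + |x| + 1) ^ 2 :=
          pow_le_pow_left₀ (by positivity) h1 2
        nlinarith
      calc (N : ℝ) ≤ R := hR
        _ < w (q i x) := hx
        _ ≤ h x := hwh
    calc ∫⁻ x in (q i) ⁻¹' {y : ℝ | R < w y}, ENNReal.ofReal (w (q i x)) ∂(gaussianReal 0 1)
        ≤ ∫⁻ x in (q i) ⁻¹' {y : ℝ | R < w y}, ENNReal.ofReal (h x) ∂(gaussianReal 0 1) := by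
          apply lintegral_mono fun x => ENNReal.ofReal_le_ofReal ?_
          simp only [hw, hhdef]
          have h1 : M + |q i x| ≤ M + |x| + 1 := by
            have := hqb i x; linarith
          have h2 : (M + |q i x|) ^ 2 ≤ (M + |x| + 1) ^ 2 :=
            pow_le_pow_left₀ (by positivity) h1 2
          nlinarith
      _ ≤ ∫⁻ x in T N, ENNReal.ofReal (h x) ∂(gaussianReal 0 1) :=
          lintegral_mono_set hsub
      _ = ν (T N) := (withDensity_apply _ (hTm N)).symm
      _ < ENNReal.ofReal ε := hN
end
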